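/- For every permutation π ∈ S_n, aid φ(π) = inv π. -/

import Mathlib

namespace PaperStats

/-- `des w` is the number of descents of the word `w` (0-indexed positions `i`
with `w(i) > w(i+1)`). -/
def des (w : List ℕ) : ℕ :=
  ((Finset.range (w.length - 1)).filter fun i => w.getD (i + 1) 0 < w.getD i 0).card

/-- `inv w` is the number of inversions of the word `w`: pairs of positions
`i < j` with `w(i) > w(j)`. -/
def inv (w : List ℕ) : ℕ :=
  ((Finset.range w.length ×ˢ Finset.range w.length).filter
    fun p => p.1 < p.2 ∧ w.getD p.2 0 < w.getD p.1 0).card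

/-- An inversion `(i,j)` of `w` is admissible if either `w(j) < w(j+1)`
(`j` is not the last position and is followed by an ascent), or there is a
position `k` strictly between `i` and `j` with `w(j) > w(k)`. -/
def IsAdmissible (w : List ℕ) (i j : ℕ) : Prop :=
  (j + 1 < w.length ∧ w.getD j 0 < w.getD (j + 1) 0) ∨
    ∃ k, i < k ∧ k < j ∧ w.getD k 0 < w.getD j 0

instance (w : List ℕ) (i j : ℕ) : Decidable (IsAdmissible w i j) :=
  decidable_of_iff ((j + 1 < w.length ∧ w.getD j 0 < w.getD (j + 1) 0) ∨
      ∃ k ∈ Finset.Ioo i j, w.getD k 0 < w.getD j 0) (by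
    unfold IsAdmissible
    simp only [Finset.mem_Ioo, and_assoc])

/-- `ai w` is the number of admissible inversions of `w`. -/
def ai (w : List ℕ) : ℕ :=
  ((Finset.range w.length ×ˢ Finset.range w.length).filter
    fun p => p.1 < p.2 ∧ w.getD p.2 0 < w.getD p.1 0 ∧ IsAdmissible w p.1 p.2).card

/-- `aid w = ai w + des w`. -/
def aid (w : List ℕ) : ℕ := ai w + des w

/-- The statistic `aix`, defined recursively: `aix ∅ = 0`; writing a nonempty
word as `π = α m β`, where `m` is the smallest letter and `α` is the maximal
prefix not containing `m`, one has `aix π = 1 + aix β` if `α = ∅`,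
`aix π = 0` if `β = ∅` (and `α ≠ ∅`), and `aix π = aix α` otherwise. -/
def aix : List ℕ → ℕ
  | [] => 0
  | x :: xs =>
    if (x :: xs).takeWhile (fun a => decide (a ≠ xs.foldr min x)) = [] then
      1 + aix (((x :: xs).dropWhile (fun a => decide (a ≠ xs.foldr min x))).tail)
    else if ((x :: xs).dropWhile (fun a => decide (a ≠ xs.foldr min x))).tail = [] then 0
    else aix ((x :: xs).takeWhile (fun a => decide (a ≠ xs.foldr min x)))
termination_by w => w.length
decreasing_by
  · simp only [List.foldr_attach] at *
    have h1 := (List.dropWhile_sublist (l := x :: xs) (fun a => decide (a ≠ xs.foldr min x))).length_le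
    have h2 := List.length_tail (l := (x :: xs).dropWhile (fun a => decide (a ≠ xs.foldr min x)))
    simp only [List.length_cons] at *
    omega
  · rename_i hα hβ
    simp only [List.foldr_attach] at *
    have h0 : ((x :: xs).takeWhile (fun a => decide (a ≠ xs.foldr min x))) ++
        ((x :: xs).dropWhile (fun a => decide (a ≠ xs.foldr min x))) = x :: xs :=
      List.takeWhile_append_dropWhile ..
    have h1 : ((x :: xs).dropWhile (fun a => decide (a ≠ xs.foldr min x))) ≠ [] := by
      intro h
      apply hβ
      rw [h]
      rfl
    have h2 := congrArg List.length h0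
    simp only [List.length_append, List.length_cons] at h2
    have h3 : 0 < ((x :: xs).dropWhile (fun a => decide (a ≠ xs.foldr min x))).length :=
      List.length_pos_iff.mpr h1
    simp only [List.length_cons]
    omega

/-- The map `f(k,τ)`: with `m` the smallest letter of `τ` together with `k`
(`k` not occurring in `τ`), and `τ = α m β` with `α` the maximal prefix of `τ`
avoiding `m`: `f(k,∅) = k`; `f(k,τ) = kτ` if `k = m`; and for `k > m`,
`f(k,τ) = f(k,β) m` if `α = ∅`, `f(k,τ) = k m α` if `β = ∅`, and
`f(k,τ) = f(k,α) m β` otherwise. -/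
def fkt (k : ℕ) : List ℕ → List ℕ
  | [] => [k]
  | x :: xs =>
    if k < xs.foldr min x then k :: x :: xs
    else if (x :: xs).takeWhile (fun a => decide (a ≠ xs.foldr min x)) = [] then
      fkt k (((x :: xs).dropWhile (fun a => decide (a ≠ xs.foldr min x))).tail) ++
        [xs.foldr min x]
    else if ((x :: xs).dropWhile (fun a => decide (a ≠ xs.foldr min x))).tail = [] then
      k :: xs.foldr min x :: ((x :: xs).takeWhile (fun a => decide (a ≠ xs.foldr min x)))
    else
      fkt k ((x :: xs).takeWhile (fun a => decide (a ≠ xs.foldr min x))) ++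
        xs.foldr min x :: ((x :: xs).dropWhile (fun a => decide (a ≠ xs.foldr min x))).tail
termination_by w => w.length
decreasing_by
  · simp only [List.foldr_attach] at *
    have h1 := (List.dropWhile_sublist (l := x :: xs) (fun a => decide (a ≠ xs.foldr min x))).length_le
    have h2 := List.length_tail (l := (x :: xs).dropWhile (fun a => decide (a ≠ xs.foldr min x)))
    simp only [List.length_cons] at *
    omega
  · rename_i hk hα hβ
    simp only [List.foldr_attach] at *
    have h0 : ((x :: xs).takeWhile (fun a => decide (a ≠ xs.foldr min x))) ++
        ((x :: xs).dropWhile (fun a => decide (a ≠ xs.foldr min x))) = x :: xs :=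
      List.takeWhile_append_dropWhile ..
    have h1 : ((x :: xs).dropWhile (fun a => decide (a ≠ xs.foldr min x))) ≠ [] := by
      intro h
      apply hβ
      rw [h]
      rfl
    have h2 := congrArg List.length h0
    simp only [List.length_append, List.length_cons] at h2
    have h3 : 0 < ((x :: xs).dropWhile (fun a => decide (a ≠ xs.foldr min x))).length :=
      List.length_pos_iff.mpr h1
    simp only [List.length_cons]
    omega

/-- `ini w` is the first letter of `w`. -/
def ini (w : List ℕ) : ℕ := w.headD 0

/-- The word of a permutation `π ∈ S_n`, namely `π(1) π(2) … π(n)`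
(with values in `{1, …, n}`). -/
def permList {n : ℕ} (π : Equiv.Perm (Fin n)) : List ℕ :=
  List.ofFn fun i => (π i : ℕ) + 1

/-- The bijection `φ`: `φ(π) = f(π(1), f(π(2), ⋯ f(π(n), ∅) ⋯ ))`. -/
def phiW (w : List ℕ) : List ℕ := w.foldr fkt []

/-- Helper: `decRun l` splits `l` into its maximal weakly decreasing prefix
and the rest. -/
def decRun : List ℕ → List ℕ × List ℕ
  | [] => ([], [])
  | [x] => ([x], [])
  | x :: y :: rest =>
    if y ≤ x then ((x :: (decRun (y :: rest)).1), (decRun (y :: rest)).2)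
    else ([x], y :: rest)

theorem decRun_append : ∀ l : List ℕ, (decRun l).1 ++ (decRun l).2 = l
  | [] => rfl
  | [x] => rfl
  | x :: y :: rest => by
    rw [decRun]
    split
    · simpa using decRun_append (y :: rest)
    · rfl

/-- Helper computing the hook factorization of a word from its reversal: the
rightmost hook of the word starts at its rightmost descent top, i.e. it is
obtained by extending the maximal weakly decreasing prefix of the reversed word
by one more letter; the process is repeated on what remains, and when no
letters usable for a hook remain the word left over is the increasing part
`π₀`. The result is `(π₀, [π₁, …, π_k])`. -/
def hookRev (r : List ℕ) : List ℕ × List (List ℕ) :=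
  match h : (decRun r).2 with
  | [] => (r.reverse, [])
  | z :: rest =>
    ((hookRev rest).1, (hookRev rest).2 ++ [z :: (decRun r).1.reverse])
termination_by r.length
decreasing_by
  have h2 := congrArg List.length (decRun_append r)
  rw [h] at h2
  simp only [List.length_append, List.length_cons] at h2
  omega

/-- The hook factorization `(π₀, [π₁, …, π_k])` of a word
`w = π₀ π₁ ⋯ π_k`, where `π₀` is increasing and each `π_i`, `i ≥ 1`, is a
hook. -/
def hookSplit (w : List ℕ) : List ℕ × List (List ℕ) := hookRev w.reverse

/-- `pix w` is the length of the initial increasing factor `π₀` in the hook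
factorization of `w`. -/
def pix (w : List ℕ) : ℕ := (hookSplit w).1.length

/-- `lec w` is the sum of the numbers of inversions of the hooks in the hook
factorization of `w`. -/
def lec (w : List ℕ) : ℕ := ((hookSplit w).2.map inv).sum

/-- A word `w(1) … w(r)` with `r ≥ 2` is a hook if
`w(1) > w(2) ≤ w(3) ≤ ⋯ ≤ w(r)`. -/
def IsHook (w : List ℕ) : Prop :=
  ∃ a b rest, w = a :: b :: rest ∧ b < a ∧ List.Chain' (· ≤ ·) (b :: rest)

/-- `w(i)` is a left-to-right maximum of `w` if `w(k) < w(i)` for all `k < i`. -/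
def IsLRMax (w : List ℕ) (i : ℕ) : Prop := ∀ k < i, w.getD k 0 < w.getD i 0

instance (w : List ℕ) (i : ℕ) : Decidable (IsLRMax w i) := by
  unfold IsLRMax; infer_instance

/-- `mix w` counts the pairs of positions `i < j` such that either
`w(i) > w(j)` and `w(i)` is a left-to-right maximum, or `w(i) < w(j)` and
there is `k < i` with `w(k) > w(j)`. -/
def mix (w : List ℕ) : ℕ :=
  ((Finset.range w.length ×ˢ Finset.range w.length).filter fun p =>
    p.1 < p.2 ∧ ((w.getD p.2 0 < w.getD p.1 0 ∧ IsLRMax w p.1) ∨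
      (w.getD p.1 0 < w.getD p.2 0 ∧ ∃ k ∈ Finset.range p.1, w.getD p.2 0 < w.getD k 0))).card

/-- `das w` counts the positions `i` such that either `w(i) > w(i+1)` and
`w(i)` is a left-to-right maximum, or `w(i) < w(i+1)` and there is `k < i`
with `w(k) > w(i+1)`. -/
def das (w : List ℕ) : ℕ :=
  ((Finset.range (w.length - 1)).filter fun i =>
    (w.getD (i + 1) 0 < w.getD i 0 ∧ IsLRMax w i) ∨
      (w.getD i 0 < w.getD (i + 1) 0 ∧ ∃ k ∈ Finset.range i, w.getD (i + 1) 0 < w.getD k 0)).card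

/-- The values of the left-to-right maxima of a word, listed in increasing
order (which is also their order of occurrence). -/
def lrMaxima : List ℕ → List ℕ
  | [] => []
  | x :: xs => x :: lrMaxima (xs.filter fun a => decide (x < a))
termination_by l => l.length
decreasing_by
  have := xs.length_filter_le (fun a => decide (x < a))
  simp only [List.length_cons]
  simp only [List.length_unattach]
  exact Nat.lt_succ_of_le ((List.length_filter_le _ _).trans (List.length_attach).le)

/-- `Bset w m` is the list of entries of `w` that are smaller than `m` and lie
to the right of (the first occurrence of) `m` in `w`. -/
def Bset (w : List ℕ) (m : ℕ) : List ℕ :=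
  ((w.dropWhile fun a => decide (a ≠ m)).tail).filter fun a => decide (a < m)

/-- Helper for `psiS`: replace the letters satisfying `P`, in order, by the
letters of the first list. -/
def replaceSub (P : ℕ → Bool) : List ℕ → List ℕ → List ℕ
  | _, [] => []
  | rs, x :: xs =>
    if P x then rs.headD x :: replaceSub P rs.tail xs else x :: replaceSub P rs xs

/-- `psiS S w` is `ψ_S(w)`: the result of reversing, in place, the subword of
`w` consisting of the entries belonging to `S`. -/
def psiS (S : List ℕ) (w : List ℕ) : List ℕ :=
  replaceSub (fun a => decide (a ∈ S)) ((w.filter fun a => decide (a ∈ S)).reverse) w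

/-- Helper applying the alternating composition
`ψ_{B₁} ∘ ψ_{B₂ ∩ B₁} ∘ ψ_{B₂} ∘ ⋯ ∘ ψ_{B_{k-1}} ∘ ψ_{B_k ∩ B_{k-1}} ∘ ψ_{B_k}`
to `w`, given the list `[B_k, B_{k-1}, …, B₁]`. -/
def psiChain : List (List ℕ) → List ℕ → List ℕ
  | [], w => w
  | [B], w => psiS B w
  | B :: B' :: rest, w => psiChain (B' :: rest) (psiS (B.inter B') (psiS B w))

/-- The Brändén–Claesson bijection `ψ`. -/
def psi (w : List ℕ) : List ℕ :=
  psiChain (((lrMaxima w).map (Bset w)).reverse) w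


open Finset

lemma ai_eq_sum (w : List ℕ) : ai w = ∑ i ∈ Finset.range w.length, ∑ j ∈ Finset.range w.length,
    (if i < j ∧ w.getD j 0 < w.getD i 0 ∧ IsAdmissible w i j then 1 else 0) := by
  rw [ai, Finset.card_filter, Finset.sum_product]

lemma inv_eq_sum (w : List ℕ) : inv w = ∑ i ∈ Finset.range w.length, ∑ j ∈ Finset.range w.length,
    (if i < j ∧ w.getD j 0 < w.getD i 0 then 1 else 0) := by
  rw [inv, Finset.card_filter, Finset.sum_product]

lemma des_eq_sum (w : List ℕ) : des w = ∑ i ∈ Finset.range (w.length - 1),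
    (if w.getD (i + 1) 0 < w.getD i 0 then 1 else 0) := by
  rw [des, Finset.card_filter]

lemma sum_range_add (f : ℕ → ℕ) (a b : ℕ) :
    ∑ i ∈ Finset.range (a + b), f i = (∑ i ∈ Finset.range a, f i) + ∑ j ∈ Finset.range b, f (a + j) := by
  induction b with
  | zero => simp
  | succ b ih =>
    have : a + (b + 1) = (a + b) + 1 := by omega
    rw [this, Finset.sum_range_succ, ih, Finset.sum_range_succ]
    omega

lemma sum_ite_getD (w : List ℕ) (p : ℕ → Bool) :
    (∑ j ∈ Finset.range w.length, if p (w.getD j 0) then 1 else 0) = w.countP p := by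
  induction w with
  | nil => simp
  | cons x xs ih =>
    rw [List.length_cons, Finset.sum_range_succ']
    simp only [List.getD_cons_succ, List.getD_cons_zero, List.countP_cons, ih]

lemma getD_mem {w : List ℕ} {i : ℕ} (h : i < w.length) : w.getD i 0 ∈ w := by
  rw [List.getD_eq_getElem _ _ h]; exact List.getElem_mem h

lemma getD_left (u : List ℕ) (m : ℕ) (v : List ℕ) {i : ℕ} (h : i < u.length) :
    (u ++ m :: v).getD i 0 = u.getD i 0 := List.getD_append _ _ _ _ h

lemma getD_mid (u : List ℕ) (m : ℕ) (v : List ℕ) : (u ++ m :: v).getD u.length 0 = m := by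
  rw [List.getD_append_right _ _ _ _ le_rfl, Nat.sub_self]; rfl

lemma getD_right (u : List ℕ) (m : ℕ) (v : List ℕ) (j : ℕ) :
    (u ++ m :: v).getD (u.length + 1 + j) 0 = v.getD j 0 := by
  rw [List.getD_append_right _ _ _ _ (by omega)]
  have : u.length + 1 + j - u.length = j + 1 := by omega
  rw [this, List.getD_cons_succ]


/-- cross count -/
def cross (u v : List ℕ) : ℕ :=
  ∑ j ∈ Finset.range v.length, u.countP (fun x => decide (v.getD j 0 < x))

lemma cross_perm {u u' : List ℕ} (v : List ℕ) (h : u.Perm u') : cross u v = cross u' v := by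
  unfold cross
  exact Finset.sum_congr rfl fun j _ => h.countP_eq _

lemma cross_nil (v : List ℕ) : cross [] v = 0 := by simp [cross]

lemma cross_cons (k : ℕ) (u v : List ℕ) :
    cross (k :: u) v = v.countP (fun y => decide (y < k)) + cross u v := by
  unfold cross
  rw [← sum_ite_getD v (fun y => decide (y < k)), ← Finset.sum_add_distrib]
  refine Finset.sum_congr rfl fun j _ => ?_
  rw [List.countP_cons]
  by_cases h : v.getD j 0 < k <;> simp [h] <;> omega

lemma adm_cons (x : ℕ) (τ : List ℕ) (i j : ℕ) :
    IsAdmissible (x :: τ) (i + 1) (j + 1) ↔ IsAdmissible τ i j := by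
  unfold IsAdmissible
  simp only [List.length_cons, List.getD_cons_succ]
  constructor
  · rintro (⟨h1, h2⟩ | ⟨t, ht1, ht2, ht3⟩)
    · exact Or.inl ⟨by omega, h2⟩
    · obtain ⟨t', rfl⟩ : ∃ t', t = t' + 1 := ⟨t - 1, by omega⟩
      exact Or.inr ⟨t', by omega, by omega, by simpa using ht3⟩
  · rintro (⟨h1, h2⟩ | ⟨t, ht1, ht2, ht3⟩)
    · exact Or.inl ⟨by omega, h2⟩
    · exact Or.inr ⟨t + 1, by omega, by omega, by simpa using ht3⟩

lemma adm_left {u : List ℕ} (m : ℕ) (v : List ℕ) {i j : ℕ} (hj : j < u.length)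
    (hum : ∀ x ∈ u, m < x) :
    IsAdmissible (u ++ m :: v) i j ↔ IsAdmissible u i j := by
  unfold IsAdmissible
  have hwj : (u ++ m :: v).getD j 0 = u.getD j 0 := getD_left u m v hj
  have hlen : (u ++ m :: v).length = u.length + (v.length + 1) := by simp
  refine or_congr ?_ ?_
  · by_cases h1 : j + 1 < u.length
    · rw [getD_left u m v h1, hwj]
      constructor
      · rintro ⟨-, h⟩; exact ⟨h1, h⟩
      · rintro ⟨-, h⟩; exact ⟨by omega, h⟩
    · have hj1 : j + 1 = u.length := by omega
      have : (u ++ m :: v).getD (j + 1) 0 = m := by rw [hj1]; exact getD_mid u m v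
      rw [this, hwj]
      constructor
      · rintro ⟨-, h⟩; exact absurd (hum _ (getD_mem hj)) (by omega)
      · rintro ⟨h, -⟩; omega
  · constructor
    · rintro ⟨t, ht1, ht2, ht3⟩
      rw [getD_left u m v (by omega), hwj] at ht3
      exact ⟨t, ht1, ht2, ht3⟩
    · rintro ⟨t, ht1, ht2, ht3⟩
      rw [← getD_left u m v (i := t) (by omega), ← hwj] at ht3
      exact ⟨t, ht1, ht2, ht3⟩

lemma adm_right (u : List ℕ) (m : ℕ) (v : List ℕ) (i j : ℕ) (hj : j < v.length) :
    IsAdmissible (u ++ m :: v) (u.length + 1 + i) (u.length + 1 + j) ↔ IsAdmissible v i j := by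
  unfold IsAdmissible
  have hlen : (u ++ m :: v).length = u.length + (v.length + 1) := by simp
  have hwj : (u ++ m :: v).getD (u.length + 1 + j) 0 = v.getD j 0 := getD_right u m v j
  have hwj1 : (u ++ m :: v).getD (u.length + 1 + j + 1) 0 = v.getD (j + 1) 0 := by
    have : u.length + 1 + j + 1 = u.length + 1 + (j + 1) := by omega
    rw [this]; exact getD_right u m v (j + 1)
  refine or_congr ?_ ?_
  · rw [hlen, hwj, hwj1]
    constructor
    · rintro ⟨h1, h2⟩; exact ⟨by omega, h2⟩
    · rintro ⟨h1, h2⟩; exact ⟨by omega, h2⟩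
  · constructor
    · rintro ⟨t, ht1, ht2, ht3⟩
      obtain ⟨t', rfl⟩ : ∃ t', t = u.length + 1 + t' := ⟨t - (u.length + 1), by omega⟩
      rw [getD_right u m v t', hwj] at ht3
      exact ⟨t', by omega, by omega, ht3⟩
    · rintro ⟨t, ht1, ht2, ht3⟩
      refine ⟨u.length + 1 + t, by omega, by omega, ?_⟩
      rw [getD_right u m v t, hwj]
      exact ht3


lemma des_append (u v : List ℕ) (m : ℕ) (hu : u ≠ []) (hum : ∀ x ∈ u, m < x)
    (hvm : ∀ y ∈ v, m < y) :
    des (u ++ m :: v) = des u + des v + 1 := by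
  have hs : 0 < u.length := List.length_pos_iff.mpr hu
  rw [des_eq_sum, des_eq_sum, des_eq_sum]
  have hlen : (u ++ m :: v).length - 1 = u.length + v.length := by
    simp [List.length_append]
  rw [hlen, sum_range_add]
  have h1 : ∑ i ∈ Finset.range u.length,
      (if (u ++ m :: v).getD (i + 1) 0 < (u ++ m :: v).getD i 0 then 1 else 0) =
      (∑ i ∈ Finset.range (u.length - 1), (if u.getD (i + 1) 0 < u.getD i 0 then 1 else 0)) + 1 := by
    have hu1 : u.length = (u.length - 1) + 1 := by omega
    rw [hu1, Finset.sum_range_succ]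
    congr 1
    · refine Finset.sum_congr rfl fun i hi => ?_
      rw [Finset.mem_range] at hi
      rw [getD_left u m v (by omega), getD_left u m v (by omega)]
    · have e1 : (u ++ m :: v).getD (u.length - 1 + 1) 0 = m := by
        have : u.length - 1 + 1 = u.length := by omega
        rw [this]; exact getD_mid u m v
      have e2 : (u ++ m :: v).getD (u.length - 1) 0 = u.getD (u.length - 1) 0 :=
        getD_left u m v (by omega)
      rw [e1, e2, if_pos (hum _ (getD_mem (by omega)))]
  have h2 : ∑ j ∈ Finset.range v.length,
      (if (u ++ m :: v).getD (u.length + j + 1) 0 < (u ++ m :: v).getD (u.length + j) 0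
        then 1 else 0) =
      ∑ i ∈ Finset.range (v.length - 1), (if v.getD (i + 1) 0 < v.getD i 0 then 1 else 0) := by
    rcases v with _ | ⟨y, ys⟩
    · simp
    · rw [List.length_cons, Finset.sum_range_succ']
      have e0 : ∀ j : ℕ, u.length + (j + 1) = u.length + 1 + j := by omega
      have ezero : (if (u ++ m :: y :: ys).getD (u.length + 0 + 1) 0 <
          (u ++ m :: y :: ys).getD (u.length + 0) 0 then 1 else 0) = 0 := by
        have e1 : u.length + 0 + 1 = u.length + 1 + 0 := by omega
        have e2 : u.length + 0 = u.length := by omega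
        rw [e1, e2, getD_right u m (y :: ys) 0, getD_mid]
        have : m < (y :: ys).getD 0 0 := hvm _ (getD_mem (by simp))
        rw [if_neg (by omega)]
      rw [ezero, add_zero]
      have hlv : ys.length + 1 - 1 = ys.length := by omega
      rw [hlv]
      refine Finset.sum_congr rfl fun i hi => ?_
      have e1 : u.length + (i + 1) + 1 = u.length + 1 + (i + 1) := by omega
      have e2 : u.length + (i + 1) = u.length + 1 + i := by omega
      rw [e1, e2, getD_right u m (y :: ys) (i + 1), getD_right u m (y :: ys) i]
  rw [h1, h2]
  omega


lemma ai_append (u v : List ℕ) (m : ℕ) (hu : u ≠ []) (hum : ∀ x ∈ u, m < x)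
    (hvm : ∀ y ∈ v, m < y) :
    ai (u ++ m :: v) = ai u + ai v + cross u v + (if v = [] then 0 else u.length) := by
  have hlen : (u ++ m :: v).length = u.length + (v.length + 1) := by simp
  rw [ai_eq_sum, hlen]
  rw [sum_range_add]
  have hsplit1 : ∀ i : ℕ, ∑ j ∈ Finset.range (u.length + (v.length + 1)),
      (if i < j ∧ (u ++ m :: v).getD j 0 < (u ++ m :: v).getD i 0 ∧
        IsAdmissible (u ++ m :: v) i j then 1 else 0)
      = (∑ j ∈ Finset.range u.length,
          (if i < j ∧ (u ++ m :: v).getD j 0 < (u ++ m :: v).getD i 0 ∧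
            IsAdmissible (u ++ m :: v) i j then 1 else 0))
        + ∑ j ∈ Finset.range (v.length + 1),
          (if i < u.length + j ∧
            (u ++ m :: v).getD (u.length + j) 0 < (u ++ m :: v).getD i 0 ∧
            IsAdmissible (u ++ m :: v) i (u.length + j) then 1 else 0) :=
    fun i => sum_range_add _ u.length (v.length + 1)
  simp only [hsplit1]
  rw [Finset.sum_add_distrib, Finset.sum_add_distrib]
  have T1 : ∑ i ∈ Finset.range u.length, ∑ j ∈ Finset.range u.length,
      (if i < j ∧ (u ++ m :: v).getD j 0 < (u ++ m :: v).getD i 0 ∧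
        IsAdmissible (u ++ m :: v) i j then 1 else 0) = ai u := by
    rw [ai_eq_sum]
    refine Finset.sum_congr rfl fun i hi => Finset.sum_congr rfl fun j hj => ?_
    rw [Finset.mem_range] at hi hj
    simp only [getD_left u m v hi, getD_left u m v hj, adm_left m v hj hum]
  have T2 : ∑ i ∈ Finset.range u.length, ∑ j ∈ Finset.range (v.length + 1),
      (if i < u.length + j ∧
        (u ++ m :: v).getD (u.length + j) 0 < (u ++ m :: v).getD i 0 ∧
        IsAdmissible (u ++ m :: v) i (u.length + j) then 1 else 0)
      = cross u v + (if v = [] then 0 else u.length) := by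
    have hinner : ∀ i ∈ Finset.range u.length, ∑ j ∈ Finset.range (v.length + 1),
        (if i < u.length + j ∧
          (u ++ m :: v).getD (u.length + j) 0 < (u ++ m :: v).getD i 0 ∧
          IsAdmissible (u ++ m :: v) i (u.length + j) then 1 else 0)
        = (∑ j ∈ Finset.range v.length, (if v.getD j 0 < u.getD i 0 then 1 else 0))
          + (if v = [] then 0 else 1) := by
      intro i hi
      rw [Finset.mem_range] at hi
      rw [Finset.sum_range_succ']
      congr 1
      · refine Finset.sum_congr rfl fun j hj => ?_
        rw [Finset.mem_range] at hj
        have e1 : u.length + (j + 1) = u.length + 1 + j := by omega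
        rw [e1]
        have hadm : IsAdmissible (u ++ m :: v) i (u.length + 1 + j) := by
          refine Or.inr ⟨u.length, hi, by omega, ?_⟩
          rw [getD_mid, getD_right u m v j]
          exact hvm _ (getD_mem hj)
        have hlt : i < u.length + 1 + j := by omega
        simp only [getD_right u m v j, getD_left u m v hi]
        simp [hadm, hlt]
      · simp only [Nat.add_zero]
        rcases v with _ | ⟨y, ys⟩
        · have hna : ¬ IsAdmissible (u ++ m :: []) i u.length := by
            rintro (⟨h1, h2⟩ | ⟨k, hk1, hk2, hk3⟩)
            · rw [hlen, List.length_nil] at h1; omega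
            · rw [getD_mid, getD_left u m [] (show k < u.length by omega)] at hk3
              exact absurd (hum _ (getD_mem (show k < u.length by omega))) (by omega)
          rw [if_neg (fun h => hna h.2.2), if_pos rfl]
        · have hadm : IsAdmissible (u ++ m :: y :: ys) i u.length := by
            refine Or.inl ⟨by rw [hlen, List.length_cons]; omega, ?_⟩
            have e2 : (u ++ m :: y :: ys).getD (u.length + 1) 0 = (y :: ys).getD 0 0 := by
              have := getD_right u m (y :: ys) 0
              rwa [Nat.add_zero] at this
            rw [getD_mid, e2]
            exact hvm _ (getD_mem (by simp))
          have e3 : (u ++ m :: y :: ys).getD u.length 0 = m := getD_mid u m (y :: ys)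
          have e4 : (u ++ m :: y :: ys).getD i 0 = u.getD i 0 := getD_left u m (y :: ys) hi
          have hm : m < u.getD i 0 := hum _ (getD_mem hi)
          rw [if_pos ⟨hi, by rw [e3, e4]; exact hm, hadm⟩, if_neg (by simp)]
    rw [Finset.sum_congr rfl hinner, Finset.sum_add_distrib]
    congr 1
    · rw [Finset.sum_comm]
      unfold cross
      refine Finset.sum_congr rfl fun j _ => ?_
      rw [← sum_ite_getD u (fun x => decide (v.getD j 0 < x))]
      refine Finset.sum_congr rfl fun i _ => ?_
      simp
    · rcases v with _ | ⟨y, ys⟩ <;> simp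
  have T3 : ∑ i ∈ Finset.range (v.length + 1), ∑ j ∈ Finset.range u.length,
      (if u.length + i < j ∧ (u ++ m :: v).getD j 0 < (u ++ m :: v).getD (u.length + i) 0 ∧
        IsAdmissible (u ++ m :: v) (u.length + i) j then 1 else 0) = 0 := by
    refine Finset.sum_eq_zero fun i _ => Finset.sum_eq_zero fun j hj => ?_
    rw [Finset.mem_range] at hj
    rw [if_neg]
    rintro ⟨h, -⟩
    omega
  have T4 : ∑ i ∈ Finset.range (v.length + 1), ∑ j ∈ Finset.range (v.length + 1),
      (if u.length + i < u.length + j ∧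
        (u ++ m :: v).getD (u.length + j) 0 < (u ++ m :: v).getD (u.length + i) 0 ∧
        IsAdmissible (u ++ m :: v) (u.length + i) (u.length + j) then 1 else 0) = ai v := by
    rw [Finset.sum_range_succ']
    have g0 : ∑ j ∈ Finset.range (v.length + 1),
        (if u.length + 0 < u.length + j ∧
          (u ++ m :: v).getD (u.length + j) 0 < (u ++ m :: v).getD (u.length + 0) 0 ∧
          IsAdmissible (u ++ m :: v) (u.length + 0) (u.length + j) then 1 else 0) = 0 := by
      refine Finset.sum_eq_zero fun j hj => ?_
      rw [Finset.mem_range] at hj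
      rw [if_neg]
      rintro ⟨h1, h2, -⟩
      obtain ⟨j', rfl⟩ : ∃ j', j = j' + 1 := ⟨j - 1, by omega⟩
      simp only [Nat.add_zero] at h2
      rw [show u.length + (j' + 1) = u.length + 1 + j' by omega, getD_right u m v j',
        getD_mid u m v] at h2
      exact absurd (hvm _ (getD_mem (show j' < v.length by omega))) (by omega)
    rw [g0, add_zero]
    have hout : ∀ i ∈ Finset.range v.length, ∑ j ∈ Finset.range (v.length + 1),
        (if u.length + (i + 1) < u.length + j ∧
          (u ++ m :: v).getD (u.length + j) 0 < (u ++ m :: v).getD (u.length + (i + 1)) 0 ∧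
          IsAdmissible (u ++ m :: v) (u.length + (i + 1)) (u.length + j) then 1 else 0)
        = ∑ j ∈ Finset.range v.length,
          (if i < j ∧ v.getD j 0 < v.getD i 0 ∧ IsAdmissible v i j then 1 else 0) := by
      intro i hi
      rw [Finset.mem_range] at hi
      rw [Finset.sum_range_succ']
      have z0 : (if u.length + (i + 1) < u.length + 0 ∧
          (u ++ m :: v).getD (u.length + 0) 0 < (u ++ m :: v).getD (u.length + (i + 1)) 0 ∧
          IsAdmissible (u ++ m :: v) (u.length + (i + 1)) (u.length + 0) then 1 else 0) = 0 := by
        rw [if_neg]; rintro ⟨h, -⟩; omega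
      rw [z0, add_zero]
      refine Finset.sum_congr rfl fun j hj => ?_
      rw [Finset.mem_range] at hj
      have ei : u.length + (i + 1) = u.length + 1 + i := by omega
      have ej : u.length + (j + 1) = u.length + 1 + j := by omega
      rw [ei, ej]
      have hiff : (u.length + 1 + i < u.length + 1 + j ∧
          (u ++ m :: v).getD (u.length + 1 + j) 0 < (u ++ m :: v).getD (u.length + 1 + i) 0 ∧
          IsAdmissible (u ++ m :: v) (u.length + 1 + i) (u.length + 1 + j))
          ↔ (i < j ∧ v.getD j 0 < v.getD i 0 ∧ IsAdmissible v i j) := by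
        rw [getD_right u m v j, getD_right u m v i, adm_right u m v i j hj]
        constructor
        · rintro ⟨h1, h2, h3⟩; exact ⟨by omega, h2, h3⟩
        · rintro ⟨h1, h2, h3⟩; exact ⟨by omega, h2, h3⟩
      rw [if_congr hiff rfl rfl]
    rw [Finset.sum_congr rfl hout, ← ai_eq_sum]
  rw [T1, T2, T3, T4]
  omega


lemma des_cons_lt (k : ℕ) (τ : List ℕ) (h : ∀ x ∈ τ, k < x) : des (k :: τ) = des τ := by
  rcases τ with _ | ⟨y, ys⟩
  · rfl
  · rw [des_eq_sum, des_eq_sum]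
    simp only [List.length_cons, Nat.add_sub_cancel]
    rw [Finset.sum_range_succ']
    have f0 : (if (k :: y :: ys).getD (0 + 1) 0 < (k :: y :: ys).getD 0 0 then 1 else 0) = 0 := by
      rw [if_neg]
      have : k < y := h y (by simp)
      simp only [List.getD_cons_succ, List.getD_cons_zero]
      omega
    rw [f0, add_zero]
    rfl

lemma ai_cons_lt (k : ℕ) (τ : List ℕ) (h : ∀ x ∈ τ, k < x) : ai (k :: τ) = ai τ := by
  rw [ai_eq_sum, ai_eq_sum, List.length_cons, Finset.sum_range_succ']
  have i0 : ∑ j ∈ Finset.range (τ.length + 1),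
      (if 0 < j ∧ (k :: τ).getD j 0 < (k :: τ).getD 0 0 ∧ IsAdmissible (k :: τ) 0 j
        then 1 else 0) = 0 := by
    refine Finset.sum_eq_zero fun j hj => ?_
    rw [Finset.mem_range] at hj
    rw [if_neg]
    rintro ⟨h1, h2, -⟩
    obtain ⟨j', rfl⟩ : ∃ j', j = j' + 1 := ⟨j - 1, by omega⟩
    rw [List.getD_cons_succ, List.getD_cons_zero] at h2
    exact absurd (h _ (getD_mem (show j' < τ.length by omega))) (by omega)
  rw [i0, add_zero]
  refine Finset.sum_congr rfl fun i hi => ?_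
  rw [Finset.mem_range] at hi
  rw [Finset.sum_range_succ']
  have j0 : (if i + 1 < 0 ∧ (k :: τ).getD 0 0 < (k :: τ).getD (i + 1) 0 ∧
      IsAdmissible (k :: τ) (i + 1) 0 then 1 else 0) = 0 := by
    rw [if_neg]; rintro ⟨h1, -⟩; omega
  rw [j0, add_zero]
  refine Finset.sum_congr rfl fun j hj => ?_
  have hiff : (i + 1 < j + 1 ∧ (k :: τ).getD (j + 1) 0 < (k :: τ).getD (i + 1) 0 ∧
      IsAdmissible (k :: τ) (i + 1) (j + 1))
      ↔ (i < j ∧ τ.getD j 0 < τ.getD i 0 ∧ IsAdmissible τ i j) := by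
    rw [List.getD_cons_succ, List.getD_cons_succ, adm_cons]
    constructor
    · rintro ⟨h1, h2, h3⟩; exact ⟨by omega, h2, h3⟩
    · rintro ⟨h1, h2, h3⟩; exact ⟨by omega, h2, h3⟩
  rw [if_congr hiff rfl rfl]

lemma aid_cons_lt (k : ℕ) (τ : List ℕ) (h : ∀ x ∈ τ, k < x) : aid (k :: τ) = aid τ := by
  rw [aid, aid, ai_cons_lt k τ h, des_cons_lt k τ h]

lemma inv_cons (k : ℕ) (τ : List ℕ) :
    inv (k :: τ) = τ.countP (fun a => decide (a < k)) + inv τ := by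
  rw [inv_eq_sum, inv_eq_sum, List.length_cons, Finset.sum_range_succ']
  have i0 : ∑ j ∈ Finset.range (τ.length + 1),
      (if 0 < j ∧ (k :: τ).getD j 0 < (k :: τ).getD 0 0 then 1 else 0)
      = τ.countP (fun a => decide (a < k)) := by
    rw [Finset.sum_range_succ']
    have j0 : (if 0 < 0 ∧ (k :: τ).getD 0 0 < (k :: τ).getD 0 0 then 1 else 0) = 0 := by
      rw [if_neg]; rintro ⟨h1, -⟩; omega
    rw [j0, add_zero, ← sum_ite_getD τ (fun a => decide (a < k))]
    refine Finset.sum_congr rfl fun j hj => ?_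
    simp only [List.getD_cons_succ, List.getD_cons_zero]
    by_cases hc : τ.getD j 0 < k
    · rw [if_pos (by omega), if_pos (by simpa using hc)]
    · rw [if_neg (by omega), if_neg (by simpa using hc)]
  rw [i0]
  have main : ∑ i ∈ Finset.range τ.length, ∑ j ∈ Finset.range (τ.length + 1),
      (if i + 1 < j ∧ (k :: τ).getD j 0 < (k :: τ).getD (i + 1) 0 then 1 else 0)
      = ∑ i ∈ Finset.range τ.length, ∑ j ∈ Finset.range τ.length,
      (if i < j ∧ τ.getD j 0 < τ.getD i 0 then 1 else 0) := by
    refine Finset.sum_congr rfl fun i hi => ?_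
    rw [Finset.sum_range_succ']
    have j0 : (if i + 1 < 0 ∧ (k :: τ).getD 0 0 < (k :: τ).getD (i + 1) 0 then 1 else 0) = 0 := by
      rw [if_neg]; rintro ⟨h1, -⟩; omega
    rw [j0, add_zero]
    refine Finset.sum_congr rfl fun j hj => ?_
    simp only [List.getD_cons_succ]
    by_cases hc : i < j ∧ τ.getD j 0 < τ.getD i 0
    · rw [if_pos ⟨by omega, hc.2⟩, if_pos hc]
    · rw [if_neg (fun hh => hc ⟨by omega, hh.2⟩), if_neg hc]
  rw [main]
  omega

lemma aid_nil : aid [] = 0 := by simp [aid, ai, des]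

lemma aid_singleton (k : ℕ) : aid [k] = 0 := by
  have h1 : ai [k] = 0 := by
    rw [ai_eq_sum]
    have hl : ([k] : List ℕ).length = 1 := rfl
    rw [hl, Finset.sum_range_one, Finset.sum_range_one, if_neg]
    rintro ⟨h, -⟩
    omega
  have h2 : des [k] = 0 := by simp [des]
  rw [aid, h1, h2]




lemma ai_nil : ai [] = 0 := by simp [ai]

lemma des_nil : des [] = 0 := by simp [des]

lemma des_singleton (k : ℕ) : des [k] = 0 := by simp [des]

lemma ai_singleton (k : ℕ) : ai [k] = 0 := by
  have := aid_singleton k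
  have h2 := des_singleton k
  rw [aid, h2] at this
  omega

lemma foldr_min_mem (x : ℕ) (xs : List ℕ) : xs.foldr min x ∈ x :: xs := by
  induction xs generalizing x with
  | nil => simp
  | cons y ys ih =>
    simp only [List.foldr_cons]
    rcases le_total y (ys.foldr min x) with h | h
    · rw [min_eq_left h]; simp
    · rw [min_eq_right h]
      rcases List.mem_cons.mp (ih x) with h' | h'
      · rw [h']; simp
      · simp [h']

lemma foldr_min_le (x : ℕ) (xs : List ℕ) : ∀ a ∈ x :: xs, xs.foldr min x ≤ a := by
  induction xs generalizing x with
  | nil =>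
    intro a ha
    simp only [List.mem_singleton] at ha
    simp [ha]
  | cons y ys ih =>
    intro a ha
    simp only [List.foldr_cons]
    rcases List.mem_cons.mp ha with rfl | ha'
    · exact le_trans (min_le_right _ _) (ih a a (by simp))
    · rcases List.mem_cons.mp ha' with rfl | ha''
      · exact min_le_left _ _
      · exact le_trans (min_le_right _ _) (ih x a (by simp [ha'']))

lemma drop_structure (x : ℕ) (xs : List ℕ) :
    (x :: xs).dropWhile (fun a => decide (a ≠ xs.foldr min x)) =
      xs.foldr min x :: ((x :: xs).dropWhile (fun a => decide (a ≠ xs.foldr min x))).tail := by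
  have hmem : xs.foldr min x ∈ x :: xs := foldr_min_mem x xs
  have hne : (x :: xs).dropWhile (fun a => decide (a ≠ xs.foldr min x)) ≠ [] := by
    intro h
    rw [List.dropWhile_eq_nil_iff] at h
    have := h _ hmem
    simp at this
  have hhead := List.head_dropWhile_not (fun a => decide (a ≠ xs.foldr min x)) hne
  have h2 : ((x :: xs).dropWhile (fun a => decide (a ≠ xs.foldr min x))).head hne
      = xs.foldr min x := not_ne_iff.mp (of_decide_eq_false hhead)
  conv_lhs => rw [← List.cons_head_tail hne]
  rw [h2]

lemma fkt_spec : ∀ N (τ : List ℕ), τ.length ≤ N → τ.Nodup → ∀ k, k ∉ τ →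
    (fkt k τ).Perm (k :: τ) ∧
      aid (fkt k τ) = aid τ + τ.countP (fun a => decide (a < k)) := by
  intro N
  induction N with
  | zero =>
    intro τ hτ _ k _
    have : τ = [] := List.length_eq_zero_iff.mp (by omega)
    subst this
    rw [fkt]
    exact ⟨List.Perm.refl _, by rw [aid_singleton, aid_nil]; rfl⟩
  | succ N ih =>
    intro τ hlen hnd k hk
    rcases τ with _ | ⟨x, xs⟩
    · rw [fkt]
      exact ⟨List.Perm.refl _, by rw [aid_singleton, aid_nil]; rfl⟩
    · rw [List.length_cons] at hlen
      rw [fkt]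
      set m := xs.foldr min x with hm
      set p : ℕ → Bool := fun a => decide (a ≠ m) with hp
      set α := (x :: xs).takeWhile p with hα
      set β := ((x :: xs).dropWhile p).tail with hβ
      have hmem : m ∈ x :: xs := foldr_min_mem x xs
      have hmle : ∀ a ∈ x :: xs, m ≤ a := foldr_min_le x xs
      have hdrop : (x :: xs).dropWhile p = m :: β := drop_structure x xs
      have hsplit : α ++ m :: β = x :: xs := by
        rw [← hdrop]
        exact List.takeWhile_append_dropWhile ..
      have hαsub : ∀ a ∈ α, a ∈ x :: xs := fun a ha =>
        (List.takeWhile_sublist p).subset ha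
      have hβsub : ∀ b ∈ β, b ∈ x :: xs := fun b hb =>
        (List.dropWhile_sublist p).subset (hdrop ▸ List.mem_cons_of_mem m hb)
      have hndmβ : (m :: β).Nodup := hdrop ▸ (List.dropWhile_sublist p).nodup hnd
      have hmβ : m ∉ β := (List.nodup_cons.mp hndmβ).1
      have hndβ : β.Nodup := (List.nodup_cons.mp hndmβ).2
      have hndα : α.Nodup := (List.takeWhile_sublist p).nodup hnd
      have hαm : ∀ a ∈ α, m < a := by
        intro a ha
        have h1 : m ≤ a := hmle a (hαsub a ha)
        have h2 : p a = true := List.mem_takeWhile_imp ha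
        simp only [hp, decide_eq_true_eq] at h2
        omega
      have hβm : ∀ b ∈ β, m < b := by
        intro b hb
        have h1 : m ≤ b := hmle b (hβsub b hb)
        have h2 : b ≠ m := fun h => hmβ (h ▸ hb)
        omega
      have hkα : k ∉ α := fun h => hk (hαsub k h)
      have hkβ : k ∉ β := fun h => hk (hβsub k h)
      have hlenab : α.length + β.length + 1 = xs.length + 1 := by
        have := congrArg List.length hsplit
        simp only [List.length_append, List.length_cons] at this
        omega
      by_cases hkm : k < m
      · rw [if_pos hkm]
        refine ⟨List.Perm.refl _, ?_⟩
        have hall : ∀ a ∈ x :: xs, k < a := fun a ha => lt_of_lt_of_le hkm (hmle a ha)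
        rw [aid_cons_lt k _ hall]
        have hc : (x :: xs).countP (fun a => decide (a < k)) = 0 := by
          rw [List.countP_eq_zero]
          intro a ha
          have := hall a ha
          simp only [decide_eq_true_eq]
          omega
        omega
      · rw [if_neg hkm]
        have hmk : m < k := by
          rcases Nat.lt_or_ge m k with h | h
          · exact h
          · exact absurd ((show k = m by omega) ▸ hmem) hk
        have hcount : (x :: xs).countP (fun a => decide (a < k))
            = α.countP (fun a => decide (a < k)) + β.countP (fun a => decide (a < k)) + 1 := by
          rw [← hsplit, List.countP_append, List.countP_cons]
          simp only [decide_eq_true_eq, if_pos hmk]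
          omega
        by_cases hα0 : α = []
        · rw [if_pos hα0]
          have heq : x :: xs = m :: β := by
            rw [hα0] at hsplit
            simpa using hsplit.symm
          have hlβ : β.length ≤ N := by omega
          obtain ⟨ihp, ihe⟩ := ih β hlβ hndβ k hkβ
          have hσne : fkt k β ≠ [] := by
            intro h
            have := ihp.length_eq
            rw [h] at this
            simp at this
          have hσm : ∀ y ∈ fkt k β, m < y := by
            intro y hy
            rcases List.mem_cons.mp (ihp.mem_iff.mp hy) with rfl | hy'
            · exact hmk
            · exact hβm y hy'
          constructor
          · rw [heq]
            exact (ihp.append_right [m]).trans (List.Perm.cons k (List.perm_append_singleton m β))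
          · have e1 : aid (fkt k β ++ [m]) = aid (fkt k β) + 1 := by
              rw [aid, ai_append (fkt k β) [] m hσne hσm (by simp),
                des_append (fkt k β) [] m hσne hσm (by simp), aid, ai_nil, des_nil]
              simp [cross]
              omega
            have e2 : aid (x :: xs) = aid β := by
              rw [heq]
              exact aid_cons_lt m β hβm
            have e3 : (x :: xs).countP (fun a => decide (a < k))
                = β.countP (fun a => decide (a < k)) + 1 := by
              rw [heq, List.countP_cons]
              simp [hmk]
            rw [e1, e2, e3, ihe]
            omega
        · rw [if_neg hα0]
          by_cases hβ0 : β = []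
          · rw [if_pos hβ0]
            have heq : x :: xs = α ++ [m] := by
              rw [hβ0] at hsplit
              exact hsplit.symm
            have hαne : α ≠ [] := hα0
            constructor
            · rw [heq]
              exact List.Perm.cons k (List.perm_append_singleton m α).symm
            · have e1 : aid (k :: m :: α) = aid α + α.countP (fun a => decide (a < k)) + 2 := by
                have hrw : (k :: m :: α) = [k] ++ m :: α := rfl
                rw [hrw, aid, ai_append [k] α m (by simp) (by simpa using hmk) hαm,
                  des_append [k] α m (by simp) (by simpa using hmk) hαm,
                  ai_singleton, des_singleton, if_neg hα0, cross_cons, cross_nil, aid]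
                have hswap : α.countP (fun y => decide (y < k))
                    = α.countP (fun a => decide (a < k)) := rfl
                simp only [List.length_cons, List.length_nil]
                omega
              have e2 : aid (x :: xs) = aid α + 1 := by
                rw [heq, aid, ai_append α [] m hαne hαm (by simp),
                  des_append α [] m hαne hαm (by simp), ai_nil, des_nil, aid]
                simp [cross]
                omega
              rw [e1, e2, hcount, hβ0]
              simp
              omega
          · rw [if_neg hβ0]
            have hβpos : 0 < β.length := List.length_pos_iff.mpr hβ0
            have hlα : α.length ≤ N := by omega
            obtain ⟨ihp, ihe⟩ := ih α hlα hndα k hkα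
            have hσne : fkt k α ≠ [] := by
              intro h
              have := ihp.length_eq
              rw [h] at this
              simp at this
            have hσm : ∀ y ∈ fkt k α, m < y := by
              intro y hy
              rcases List.mem_cons.mp (ihp.mem_iff.mp hy) with rfl | hy'
              · exact hmk
              · exact hαm y hy'
            have hσlen : (fkt k α).length = α.length + 1 := by
              rw [ihp.length_eq]; rfl
            constructor
            · rw [← hsplit]
              exact ihp.append_right (m :: β)
            · have e1 : aid (fkt k α ++ m :: β)
                  = aid (fkt k α) + aid β + cross (fkt k α) β + (fkt k α).length + 1 := by
                rw [aid, ai_append (fkt k α) β m hσne hσm hβm,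
                  des_append (fkt k α) β m hσne hσm hβm, if_neg hβ0, aid, aid]
                omega
              have e2 : aid (x :: xs) = aid α + aid β + cross α β + α.length + 1 := by
                rw [← hsplit, aid, ai_append α β m hα0 hαm hβm,
                  des_append α β m hα0 hαm hβm, if_neg hβ0, aid, aid]
                omega
              have e3 : cross (fkt k α) β
                  = β.countP (fun y => decide (y < k)) + cross α β := by
                rw [cross_perm β ihp, cross_cons]
              rw [e1, e2, e3, ihe, hσlen, hcount]
              omega



lemma inv_nil : inv [] = 0 := by simp [inv]

lemma phiW_spec (w : List ℕ) (h : w.Nodup) : (phiW w).Perm w ∧ aid (phiW w) = inv w := by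
  induction w with
  | nil =>
    exact ⟨List.Perm.refl _, by rw [show phiW ([] : List ℕ) = [] from rfl, aid_nil, inv_nil]⟩
  | cons k w ihw =>
    obtain ⟨hkw, hw⟩ := List.nodup_cons.mp h
    obtain ⟨hperm, he⟩ := ihw hw
    have hphi : phiW (k :: w) = fkt k (phiW w) := rfl
    have hnodup : (phiW w).Nodup := hperm.nodup_iff.mpr hw
    have hkphi : k ∉ phiW w := fun hkp => hkw (hperm.mem_iff.mp hkp)
    obtain ⟨hp2, he2⟩ := fkt_spec (phiW w).length (phiW w) le_rfl hnodup k hkphi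
    constructor
    · rw [hphi]
      exact hp2.trans (List.Perm.cons k hperm)
    · rw [hphi, he2, he, hperm.countP_eq, inv_cons]
      omega



/-- For every permutation `π ∈ S_n`, `aid φ(π) = inv π`. -/
theorem aid_phi_eq_inv (n : ℕ) (π : Equiv.Perm (Fin n)) :
    aid (phiW (permList π)) = inv (permList π) := by
  have hnd : (permList π).Nodup := by
    rw [permList, List.nodup_ofFn]
    intro i j hij
    have hv : (π i : ℕ) = π j := by simpa using hij
    exact π.injective (Fin.val_injective hv)
  exact (phiW_spec _ hnd).2

end PaperStats
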